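/- arXiv:2302.14860 — 3 statements merged into one kernel-verified Lean document; each statement's English description precedes it below -/
import Mathlib

section
/- Let n ∈ ℕ and let q ≥ 2 be a prime modulus with m ≥ 2n·log₂(q). Then for all but at most a q^(−n) fraction of matrices A ∈ ℤ_q^(n×m), the columns of A generate ℤ_q^n as an additive group; equivalently, if A is drawn uniformly at random from ℤ_q^(n×m), then the probability that the columns of A do not generate ℤ_q^n is at most q^(−n). -/
open scoped Classical

section Aux

variable {q : ℕ} [Fact (Nat.Prime q)]

/-- The linear functional `v ↦ ∑ i, v i * y i`. -/
private def ellAux (n : ℕ) (y : Fin n → ZMod q) : (Fin n → ZMod q) →ₗ[ZMod q] ZMod q where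
  toFun v := ∑ i, v i * y i
  map_add' a b := by simp [add_mul, Finset.sum_add_distrib]
  map_smul' c v := by simp [Finset.mul_sum, mul_assoc]

private lemma ellAux_surj (n : ℕ) (y : Fin n → ZMod q) (hy : y ≠ 0) :
    Function.Surjective (ellAux n y) := by
  obtain ⟨i, hi⟩ : ∃ i, y i ≠ 0 := by
    by_contra h
    push_neg at h
    exact hy (funext h)
  intro c
  refine ⟨Pi.single i (c * (y i)⁻¹), ?_⟩
  have hdef : ellAux n y (Pi.single i (c * (y i)⁻¹)) =
      ∑ j, (Pi.single i (c * (y i)⁻¹) : Fin n → ZMod q) j * y j := rfl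
  rw [hdef, Finset.sum_eq_single i]
  · rw [Pi.single_eq_same, mul_assoc, inv_mul_cancel₀ hi, mul_one]
  · intro b _ hb
    rw [Pi.single_eq_of_ne hb, zero_mul]
  · intro h; exact absurd (Finset.mem_univ i) h

private lemma card_ker_mul (n : ℕ) (y : Fin n → ZMod q) (hy : y ≠ 0) :
    Fintype.card {v : Fin n → ZMod q // ∑ i, v i * y i = 0} * q = q ^ n := by
  set f := (ellAux n y).toAddMonoidHom with hf
  have hsurj : Function.Surjective f := ellAux_surj n y hy
  have h1 : Nat.card (Fin n → ZMod q) =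
      Nat.card ((Fin n → ZMod q) ⧸ f.ker) * Nat.card f.ker :=
    AddSubgroup.card_eq_card_quotient_mul_card_addSubgroup f.ker
  have h2 : Nat.card ((Fin n → ZMod q) ⧸ f.ker) = q := by
    rw [Nat.card_congr (QuotientAddGroup.quotientKerEquivOfSurjective f hsurj).toEquiv]
    simp [Nat.card_eq_fintype_card, ZMod.card]
  have h3 : Nat.card f.ker = Fintype.card {v : Fin n → ZMod q // ∑ i, v i * y i = 0} := by
    rw [Nat.card_eq_fintype_card]
    apply Fintype.card_congr
    refine Equiv.subtypeEquivRight fun v => ?_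
    exact Iff.rfl
  have h4 : Nat.card (Fin n → ZMod q) = q ^ n := by
    simp [Nat.card_eq_fintype_card, ZMod.card]
  rw [h2, h3, h4] at h1
  exact (mul_comm _ _).trans h1.symm

private lemma card_Sy (n m : ℕ) (y : Fin n → ZMod q) :
    (Finset.univ.filter (fun A : Matrix (Fin n) (Fin m) (ZMod q) =>
        ∀ j, ∑ i, A i j * y i = 0)).card
      = (Fintype.card {v : Fin n → ZMod q // ∑ i, v i * y i = 0}) ^ m := by
  rw [← Fintype.card_subtype]
  have e : {A : Matrix (Fin n) (Fin m) (ZMod q) // ∀ j, ∑ i, A i j * y i = 0}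
      ≃ (Fin m → {v : Fin n → ZMod q // ∑ i, v i * y i = 0}) :=
    { toFun := fun A j => ⟨fun i => A.1 i j, A.2 j⟩
      invFun := fun f => ⟨fun i j => (f j).1 i, fun j => (f j).2⟩
      left_inv := fun A => rfl
      right_inv := fun f => rfl }
  rw [Fintype.card_congr e]
  simp [Fintype.card_fun]

private lemma exists_y (n m : ℕ) (A : Matrix (Fin n) (Fin m) (ZMod q))
    (h : AddSubgroup.closure (Set.range fun j : Fin m => fun i : Fin n => A i j)
        ≠ (⊤ : AddSubgroup (Fin n → ZMod q))) :
    ∃ y : Fin n → ZMod q, y ≠ 0 ∧ ∀ j, ∑ i, A i j * y i = 0 := by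
  set S : Set (Fin n → ZMod q) := Set.range fun j : Fin m => fun i : Fin n => A i j with hS
  have hW : Submodule.span (ZMod q) S ≠ ⊤ := by
    intro htop
    apply h
    have hle : Submodule.span (ZMod q) S ≤
        AddSubgroup.toZModSubmodule q (AddSubgroup.closure S) :=
      Submodule.span_le.2 fun x hx => AddSubgroup.subset_closure hx
    rw [eq_top_iff]
    intro x _
    exact hle (htop ▸ Submodule.mem_top)
  obtain ⟨f, hf0, hfbot⟩ :=
    Submodule.exists_dual_map_eq_bot_of_lt_top (lt_top_iff_ne_top.2 hW) inferInstance
  set y : Fin n → ZMod q := fun i => f (fun j => if i = j then 1 else 0) with hy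
  have hf_eq : ∀ v, f v = ∑ i, v i * y i := by
    intro v
    conv_lhs => rw [pi_eq_sum_univ v]
    rw [map_sum]
    exact Finset.sum_congr rfl fun i _ => by rw [map_smul, smul_eq_mul]
  refine ⟨y, ?_, ?_⟩
  · intro hy0
    refine hf0 (LinearMap.ext fun v => ?_)
    rw [hf_eq v, hy0]
    simp
  · intro j
    have hmem : (fun i => A i j) ∈ Submodule.span (ZMod q) S :=
      Submodule.subset_span ⟨j, rfl⟩
    have : f (fun i => A i j) ∈ Submodule.map f (Submodule.span (ZMod q) S) :=
      Submodule.mem_map_of_mem hmem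
    rw [hfbot, Submodule.mem_bot] at this
    rw [← hf_eq]
    exact this

private lemma arithAux (n m : ℕ) (hn : 0 < n) (hm : 2 * n ≤ m) :
    n + (n - 1) * m + n ≤ n * m := by
  have h1 : (n - 1) * m = n * m - m := Nat.sub_one_mul n m
  have h2 : m ≤ n * m := Nat.le_mul_of_pos_left m hn
  omega

end Aux

/-- For a prime modulus `q` and `m ≥ 2n·log₂ q`, all but at most a `q^(-n)`
fraction of matrices `A ∈ ℤ_q^(n×m)` have columns generating `ℤ_q^n` as an additive group:
the number of matrices whose columns fail to generate is at most `q^(-n)` times the total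
number of matrices. -/
theorem stmt_0 (n m q : ℕ) [Fact (Nat.Prime q)]
    (hm : (m : ℝ) ≥ 2 * n * Real.logb 2 q) :
    ((Finset.univ.filter (fun A : Matrix (Fin n) (Fin m) (ZMod q) =>
        AddSubgroup.closure (Set.range fun j : Fin m => fun i : Fin n => A i j)
          ≠ (⊤ : AddSubgroup (Fin n → ZMod q)))).card : ℝ)
      ≤ (q : ℝ) ^ (-(n : ℤ)) * (Fintype.card (Matrix (Fin n) (Fin m) (ZMod q)) : ℝ) := by
  have hq2 : 2 ≤ q := (Fact.out (p := q.Prime)).two_le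
  have hq0 : (0 : ℝ) < q := by positivity
  rcases Nat.eq_zero_or_pos n with hn | hn
  · subst hn
    have h1 : ((Finset.univ.filter (fun A : Matrix (Fin 0) (Fin m) (ZMod q) =>
        AddSubgroup.closure (Set.range fun j : Fin m => fun i : Fin 0 => A i j)
          ≠ (⊤ : AddSubgroup (Fin 0 → ZMod q)))).card : ℝ)
        ≤ (Fintype.card (Matrix (Fin 0) (Fin m) (ZMod q)) : ℝ) := by
      have := Finset.card_filter_le (Finset.univ : Finset (Matrix (Fin 0) (Fin m) (ZMod q)))
        (fun A => AddSubgroup.closure (Set.range fun j : Fin m => fun i : Fin 0 => A i j)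
          ≠ (⊤ : AddSubgroup (Fin 0 → ZMod q)))
      rw [Finset.card_univ] at this
      exact_mod_cast this
    simpa using h1
  -- n ≥ 1
  have hlogb : (1 : ℝ) ≤ Real.logb 2 q := by
    rw [show (1 : ℝ) = Real.logb 2 2 from (Real.logb_self_eq_one (by norm_num)).symm]
    exact Real.logb_le_logb_of_le (by norm_num) (by norm_num) (by exact_mod_cast hq2)
  have hm2n : 2 * n ≤ m := by
    have h : ((2 * n : ℕ) : ℝ) ≤ (m : ℝ) := by
      push_cast
      nlinarith [hm, hlogb, Nat.cast_nonneg (α := ℝ) n]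
    exact_mod_cast h
  -- counting bound in ℕ
  have hker : ∀ y : Fin n → ZMod q, y ≠ 0 →
      Fintype.card {v : Fin n → ZMod q // ∑ i, v i * y i = 0} = q ^ (n - 1) := by
    intro y hy
    have h := card_ker_mul n y hy
    have hpow : q ^ n = q ^ (n - 1) * q := by
      rw [← pow_succ]
      congr 1
      exact (Nat.succ_pred_eq_of_pos hn).symm
    rw [hpow] at h
    exact Nat.eq_of_mul_eq_mul_right (Nat.lt_of_lt_of_le (by norm_num) hq2) h
  have hsub : (Finset.univ.filter (fun A : Matrix (Fin n) (Fin m) (ZMod q) =>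
        AddSubgroup.closure (Set.range fun j : Fin m => fun i : Fin n => A i j)
          ≠ (⊤ : AddSubgroup (Fin n → ZMod q))))
      ⊆ (Finset.univ.filter (fun y : Fin n → ZMod q => y ≠ 0)).biUnion
          (fun y => Finset.univ.filter
            (fun A : Matrix (Fin n) (Fin m) (ZMod q) => ∀ j, ∑ i, A i j * y i = 0)) := by
    intro A hA
    rw [Finset.mem_filter] at hA
    obtain ⟨y, hy, hAy⟩ := exists_y n m A hA.2
    rw [Finset.mem_biUnion]
    exact ⟨y, by simp [hy], by simp [hAy]⟩
  have hcount : (Finset.univ.filter (fun A : Matrix (Fin n) (Fin m) (ZMod q) =>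
        AddSubgroup.closure (Set.range fun j : Fin m => fun i : Fin n => A i j)
          ≠ (⊤ : AddSubgroup (Fin n → ZMod q)))).card
      ≤ q ^ n * q ^ ((n - 1) * m) := by
    calc _ ≤ ((Finset.univ.filter (fun y : Fin n → ZMod q => y ≠ 0)).biUnion
          (fun y => Finset.univ.filter
            (fun A : Matrix (Fin n) (Fin m) (ZMod q) => ∀ j, ∑ i, A i j * y i = 0))).card :=
        Finset.card_le_card hsub
      _ ≤ ∑ y ∈ Finset.univ.filter (fun y : Fin n → ZMod q => y ≠ 0),
            (Finset.univ.filter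
              (fun A : Matrix (Fin n) (Fin m) (ZMod q) => ∀ j, ∑ i, A i j * y i = 0)).card :=
        Finset.card_biUnion_le
      _ = ∑ y ∈ Finset.univ.filter (fun y : Fin n → ZMod q => y ≠ 0), q ^ ((n - 1) * m) := by
        apply Finset.sum_congr rfl
        intro y hy
        rw [Finset.mem_filter] at hy
        rw [card_Sy, hker y hy.2, ← pow_mul]
      _ = (Finset.univ.filter (fun y : Fin n → ZMod q => y ≠ 0)).card * q ^ ((n - 1) * m) := by
        rw [Finset.sum_const, smul_eq_mul]
      _ ≤ q ^ n * q ^ ((n - 1) * m) := by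
        apply Nat.mul_le_mul_right
        calc (Finset.univ.filter (fun y : Fin n → ZMod q => y ≠ 0)).card
            ≤ (Finset.univ : Finset (Fin n → ZMod q)).card := Finset.card_filter_le _ _
          _ = q ^ n := by rw [Finset.card_univ]; simp [ZMod.card]
  have hcard : Fintype.card (Matrix (Fin n) (Fin m) (ZMod q)) = q ^ (n * m) := by
    show Fintype.card (Fin n → Fin m → ZMod q) = q ^ (n * m)
    rw [Fintype.card_fun, Fintype.card_fun]
    simp [ZMod.card, ← pow_mul, mul_comm m n]
  rw [hcard]
  calc ((Finset.univ.filter (fun A : Matrix (Fin n) (Fin m) (ZMod q) =>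
        AddSubgroup.closure (Set.range fun j : Fin m => fun i : Fin n => A i j)
          ≠ (⊤ : AddSubgroup (Fin n → ZMod q)))).card : ℝ)
      ≤ ((q ^ n * q ^ ((n - 1) * m) : ℕ) : ℝ) := by exact_mod_cast hcount
    _ ≤ (q : ℝ) ^ (-(n : ℤ)) * ((q ^ (n * m) : ℕ) : ℝ) := by
        push_cast
        rw [zpow_neg, zpow_natCast, inv_mul_eq_div, le_div_iff₀ (by positivity)]
        rw [← pow_add, ← pow_add]
        apply pow_le_pow_right₀ (by exact_mod_cast hq2.trans' (by norm_num) : (1:ℝ) ≤ q)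
        exact arithAux n m hn hm2n
end

section
/- For every constant c > 0 there exists M ∈ ℕ such that for all m ≥ M, all q ∈ ℕ with q ≥ 2, and all σ ∈ (√(2m), q/√(2m)), it holds that (Σ_{x ∈ ℤ_q^m, ‖x‖ > σ√(m/2)} ρ_σ(x)²) / (Σ_{x ∈ ℤ_q^m} ρ_σ(x)²) ≤ m^(−c). Consequently, the normalized vector ψ = Σ_{x ∈ ℤ_q^m} ρ_σ(x)|x⟩ / ‖·‖₂ in ℂ^(ℤ_q^m) is within negligible (in m) trace distance of its truncation to the support {x ∈ ℤ_q^m : ‖x‖ ≤ σ√(m/2)}. -/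
open scoped Classical

/-- The Gaussian measure `ρ_σ(x) = exp(-π‖x‖²/σ²)` on `ℝ^m`. -/
noncomputable def rho {m : ℕ} (σ : ℝ) (x : Fin m → ℝ) : ℝ :=
  Real.exp (-Real.pi * (∑ i, (x i) ^ 2) / σ ^ 2)

/-- The canonical representative of `x ∈ ℤ_q^m` in `ℤ^m ∩ (-q/2, q/2]^m`, as a real vector. -/
noncomputable def zrep {q m : ℕ} [NeZero q] (x : Fin m → ZMod q) : Fin m → ℝ :=
  fun i => ((x i).valMinAbs : ℝ)

/-- The amplitudes of the truncation of the Gaussian state `Σ_x ρ_σ(x)|x⟩` to the support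
`{x ∈ ℤ_q^m : ‖x‖ ≤ σ√(m/2)}`. -/
noncomputable def psiTrunc {q m : ℕ} [NeZero q] (σ : ℝ) (x : Fin m → ZMod q) : ℝ :=
  if Real.sqrt (∑ i, (zrep x i) ^ 2) ≤ σ * Real.sqrt ((m : ℝ) / 2)
  then rho σ (zrep x) else 0


open Finset


lemma aux_gauss_sum_int {b : ℝ} (hb : 0 < b) (n : ℕ) :
    ∑ i ∈ Finset.range n, Real.exp (-b * ((i:ℝ)+1) ^ 2) ≤ Real.sqrt (Real.pi / b) / 2 := by
  set g : ℝ → ℝ := fun t => Real.exp (-b * t ^ 2) with hg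
  have hganti : AntitoneOn g (Set.Icc (0:ℝ) (0 + n)) := by
    intro s hs t ht hst
    simp only [hg]
    apply Real.exp_le_exp.2
    have h2 : s^2 ≤ t^2 := by nlinarith [hs.1]
    nlinarith [h2, hb]
  have h1 : (∑ i ∈ Finset.range n, g (0 + ((i + 1 : ℕ)))) ≤ ∫ x in (0:ℝ)..(0 + n), g x :=
    AntitoneOn.sum_le_integral hganti
  have h2 : (∫ x in (0:ℝ)..(0 + n), g x) ≤ ∫ x in Set.Ioi (0:ℝ), g x := by
    rw [zero_add, intervalIntegral.integral_of_le (by positivity)]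
    apply MeasureTheory.setIntegral_mono_set
    · exact (integrable_exp_neg_mul_sq hb).integrableOn
    · filter_upwards with x using (Real.exp_pos _).le
    · filter_upwards with x hx using hx.1
  have h3 : (∫ x in Set.Ioi (0:ℝ), g x) = Real.sqrt (Real.pi / b) / 2 :=
    integral_gaussian_Ioi b
  calc ∑ i ∈ Finset.range n, Real.exp (-b * ((i:ℝ)+1) ^ 2)
      = ∑ i ∈ Finset.range n, g (0 + ((i + 1 : ℕ))) := by
        apply Finset.sum_congr rfl; intro i _; simp [hg]
    _ ≤ _ := h1
    _ ≤ _ := h2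
    _ = _ := h3

lemma aux_theta_upper {q : ℕ} [NeZero q] {b : ℝ} (hb : 0 < b) :
    ∑ v : ZMod q, Real.exp (-b * ((v.valMinAbs : ℝ)) ^ 2) ≤ 2 + Real.sqrt (Real.pi / b) := by
  classical
  set G : ℤ → ℝ := fun k => Real.exp (-b * (k:ℝ) ^ 2) with hG
  have hG0 : ∀ k, 0 ≤ G k := fun k => (Real.exp_pos _).le
  set T1 : Finset ℤ := (Finset.range (q+1)).image (fun i : ℕ => (i : ℤ)) with hT1
  set T2 : Finset ℤ := (Finset.range (q+1)).image (fun i : ℕ => -(i : ℤ)) with hT2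
  have hsub : (Finset.univ.image (ZMod.valMinAbs : ZMod q → ℤ)) ⊆ T1 ∪ T2 := by
    intro k hk
    simp only [Finset.mem_image, Finset.mem_univ, true_and] at hk
    obtain ⟨v, rfl⟩ := hk
    have hle : v.valMinAbs.natAbs ≤ q := le_trans (ZMod.natAbs_valMinAbs_le v) (Nat.div_le_self _ _)
    rcases Int.natAbs_eq v.valMinAbs with h | h
    · apply Finset.mem_union_left
      simp only [hT1, Finset.mem_image, Finset.mem_range]
      exact ⟨v.valMinAbs.natAbs, Nat.lt_succ_of_le hle, h.symm⟩
    · apply Finset.mem_union_right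
      simp only [hT2, Finset.mem_image, Finset.mem_range]
      exact ⟨v.valMinAbs.natAbs, Nat.lt_succ_of_le hle, h.symm⟩
  have step1 : ∑ v : ZMod q, Real.exp (-b * ((v.valMinAbs : ℝ)) ^ 2)
      = ∑ k ∈ Finset.univ.image (ZMod.valMinAbs : ZMod q → ℤ), G k := by
    rw [Finset.sum_image (fun x _ y _ h => ZMod.injective_valMinAbs h)]
  have step2 : ∑ k ∈ Finset.univ.image (ZMod.valMinAbs : ZMod q → ℤ), G k ≤ ∑ k ∈ T1 ∪ T2, G k :=
    Finset.sum_le_sum_of_subset_of_nonneg hsub (fun k _ _ => hG0 k)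
  have step3 : ∑ k ∈ T1 ∪ T2, G k ≤ ∑ k ∈ T1, G k + ∑ k ∈ T2, G k := by
    rw [← Finset.union_sdiff_self_eq_union, Finset.sum_union Finset.disjoint_sdiff]
    exact add_le_add le_rfl
      (Finset.sum_le_sum_of_subset_of_nonneg Finset.sdiff_subset (fun k _ _ => hG0 k))
  have hT1sum : ∑ k ∈ T1, G k = ∑ i ∈ Finset.range (q+1), Real.exp (-b * (i:ℝ)^2) := by
    rw [hT1, Finset.sum_image (by intro x _ y _ h; simp only at h; exact_mod_cast h)]
    simp [hG]
  have hT2sum : ∑ k ∈ T2, G k = ∑ i ∈ Finset.range (q+1), Real.exp (-b * (i:ℝ)^2) := by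
    rw [hT2, Finset.sum_image (by intro x _ y _ h; simp only at h; omega)]
    simp [hG]
  have hrange : ∑ i ∈ Finset.range (q+1), Real.exp (-b * (i:ℝ)^2)
      ≤ 1 + Real.sqrt (Real.pi / b) / 2 := by
    rw [Finset.sum_range_succ']
    have h := aux_gauss_sum_int hb q
    have e1 : ∑ i ∈ Finset.range q, Real.exp (-b * ((i+1 : ℕ):ℝ)^2)
        = ∑ i ∈ Finset.range q, Real.exp (-b * ((i:ℝ)+1)^2) := by
      apply Finset.sum_congr rfl; intro i _; push_cast; ring_nf
    rw [e1]
    have e2 : Real.exp (-b * ((0:ℕ):ℝ)^2) = 1 := by norm_num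
    rw [e2]
    linarith
  calc ∑ v : ZMod q, Real.exp (-b * ((v.valMinAbs : ℝ)) ^ 2)
      = ∑ k ∈ Finset.univ.image (ZMod.valMinAbs : ZMod q → ℤ), G k := step1
    _ ≤ ∑ k ∈ T1 ∪ T2, G k := step2
    _ ≤ ∑ k ∈ T1, G k + ∑ k ∈ T2, G k := step3
    _ ≤ (1 + Real.sqrt (Real.pi / b) / 2) + (1 + Real.sqrt (Real.pi / b) / 2) := by
        rw [hT1sum, hT2sum]; linarith
    _ = 2 + Real.sqrt (Real.pi / b) := by ring

lemma aux_theta_lower {q : ℕ} [NeZero q] {b : ℝ} (hb : 0 ≤ b) (n : ℕ) (hn : 2*n < q) :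
    (2*(n:ℝ)+1) * Real.exp (-b * (n:ℝ)^2) ≤ ∑ v : ZMod q, Real.exp (-b * ((v.valMinAbs : ℝ))^2) := by
  classical
  set T : Finset (ZMod q) := (Finset.Icc (-(n:ℤ)) n).image (fun k : ℤ => (k : ZMod q)) with hT
  have hinj : ∀ x ∈ Finset.Icc (-(n:ℤ)) n, ∀ y ∈ Finset.Icc (-(n:ℤ)) n,
      (x : ZMod q) = (y : ZMod q) → x = y := by
    intro x hx y hy hxy
    simp only [Finset.mem_Icc] at hx hy
    have hdvd : (q:ℤ) ∣ x - y := by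
      rwa [← ZMod.intCast_zmod_eq_zero_iff_dvd, Int.cast_sub, sub_eq_zero]
    have := Int.eq_zero_of_abs_lt_dvd hdvd (by rw [abs_lt]; constructor <;> [push_cast; push_cast] <;> omega)
    omega
  have hvma : ∀ x ∈ Finset.Icc (-(n:ℤ)) n, ((x : ZMod q).valMinAbs) = x := by
    intro x hx
    simp only [Finset.mem_Icc] at hx
    rw [ZMod.valMinAbs_spec]
    refine ⟨rfl, ?_, ?_⟩ <;> push_cast <;> omega
  have step1 : ∑ v ∈ T, Real.exp (-b * ((v.valMinAbs : ℝ))^2)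
      ≤ ∑ v : ZMod q, Real.exp (-b * ((v.valMinAbs : ℝ))^2) :=
    Finset.sum_le_sum_of_subset_of_nonneg (Finset.subset_univ T)
      (fun v _ _ => (Real.exp_pos _).le)
  have step2 : ∑ v ∈ T, Real.exp (-b * ((v.valMinAbs : ℝ))^2)
      = ∑ k ∈ Finset.Icc (-(n:ℤ)) n, Real.exp (-b * ((k:ℝ))^2) := by
    rw [hT, Finset.sum_image hinj]
    apply Finset.sum_congr rfl
    intro k hk
    rw [hvma k hk]
  have step3 : (2*(n:ℝ)+1) * Real.exp (-b * (n:ℝ)^2)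
      ≤ ∑ k ∈ Finset.Icc (-(n:ℤ)) n, Real.exp (-b * ((k:ℝ))^2) := by
    have hcard : (Finset.Icc (-(n:ℤ)) n).card = 2*n+1 := by
      rw [Int.card_Icc]; omega
    have hconst : ∑ _k ∈ Finset.Icc (-(n:ℤ)) n, Real.exp (-b * (n:ℝ)^2)
        = (2*(n:ℝ)+1) * Real.exp (-b * (n:ℝ)^2) := by
      rw [Finset.sum_const, hcard, nsmul_eq_mul]
      push_cast; ring
    rw [← hconst]
    apply Finset.sum_le_sum
    intro k hk
    simp only [Finset.mem_Icc] at hk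
    apply Real.exp_le_exp.2
    have hk2 : (k:ℝ)^2 ≤ (n:ℝ)^2 := by
      apply sq_le_sq' <;> push_cast <;> [exact_mod_cast hk.1; exact_mod_cast hk.2]
    nlinarith
  linarith [step1, step2.symm ▸ step3]

lemma aux_sum_pi_eq_pow {q m : ℕ} [NeZero q] (h : ZMod q → ℝ) :
    ∑ x : Fin m → ZMod q, ∏ i, h (x i) = (∑ v : ZMod q, h v) ^ m := by
  rw [← Fintype.piFinset_univ, ← Finset.prod_univ_sum]
  simp

set_option maxHeartbeats 1000000 in
lemma aux_ratio {m q : ℕ} [NeZero q] (hm : 5000 ≤ m) {σ : ℝ}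
    (h1 : Real.sqrt (2*m) < σ) (h2 : σ < q / Real.sqrt (2*m)) :
    (∑ x : Fin m → ZMod q,
        if σ * Real.sqrt ((m : ℝ) / 2) < Real.sqrt (∑ i, (zrep x i) ^ 2)
        then rho σ (zrep x) ^ 2 else 0)
      ≤ (9/10 : ℝ)^m * ∑ x : Fin m → ZMod q, rho σ (zrep x) ^ 2 := by
  have hπ := Real.pi_gt_three
  have hπpos := Real.pi_pos
  -- σ > 100
  have hmR : (10000:ℝ) ≤ 2*m := by
    have : (5000:ℝ) ≤ m := by exact_mod_cast hm
    linarith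
  have h100 : (100:ℝ) ≤ Real.sqrt (2*m) := by
    rw [show (100:ℝ) = Real.sqrt 10000 by
      rw [show (10000:ℝ) = 100^2 by norm_num, Real.sqrt_sq (by norm_num)]]
    exact Real.sqrt_le_sqrt hmR
  have hσ : 100 < σ := lt_of_le_of_lt h100 h1
  have hσpos : 0 < σ := by linarith
  have hσne : σ ≠ 0 := ne_of_gt hσpos
  have hqσ : 100 * σ < q := by
    have hs : 0 < Real.sqrt (2*m) := by linarith
    have h3 : σ * Real.sqrt (2*m) < q := by
      rw [lt_div_iff₀ hs] at h2; linarith [h2]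
    nlinarith [h100, hσpos]
  set c1 : ℝ := Real.pi / σ^2 with hc1
  set c2 : ℝ := 2*Real.pi / σ^2 with hc2
  have hc1pos : 0 < c1 := by positivity
  have hc2pos : 0 < c2 := by positivity
  set A : ℝ := ∑ v : ZMod q, Real.exp (-c1 * ((v.valMinAbs : ℝ))^2) with hA
  set B : ℝ := ∑ v : ZMod q, Real.exp (-c2 * ((v.valMinAbs : ℝ))^2) with hB
  -- factorizations
  have hfact : ∀ c : ℝ, ∑ x : Fin m → ZMod q, Real.exp (-c * (∑ i, (zrep x i)^2))
      = (∑ v : ZMod q, Real.exp (-c * ((v.valMinAbs : ℝ))^2)) ^ m := by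
    intro c
    rw [← aux_sum_pi_eq_pow (fun v => Real.exp (-c * ((v.valMinAbs : ℝ))^2))]
    apply Finset.sum_congr rfl
    intro x _
    rw [Finset.mul_sum, Real.exp_sum]
    rfl
  have hrho2 : ∀ x : Fin m → ZMod q, rho σ (zrep x) ^ 2
      = Real.exp (-c2 * (∑ i, (zrep x i)^2)) := by
    intro x
    rw [rho, sq, ← Real.exp_add, hc2]
    congr 1
    field_simp
    ring
  have hden : ∑ x : Fin m → ZMod q, rho σ (zrep x) ^ 2 = B ^ m := by
    rw [hB, ← hfact c2]
    exact Finset.sum_congr rfl fun x _ => hrho2 x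
  -- pointwise Chernoff
  have hnum : (∑ x : Fin m → ZMod q,
        if σ * Real.sqrt ((m : ℝ) / 2) < Real.sqrt (∑ i, (zrep x i) ^ 2)
        then rho σ (zrep x) ^ 2 else 0)
      ≤ Real.exp (-Real.pi * m / 2) * A ^ m := by
    rw [hA, ← hfact c1, Finset.mul_sum]
    apply Finset.sum_le_sum
    intro x _
    set N : ℝ := ∑ i, (zrep x i)^2 with hN
    have hNnn : 0 ≤ N := Finset.sum_nonneg fun i _ => sq_nonneg _
    by_cases hcond : σ * Real.sqrt ((m : ℝ) / 2) < Real.sqrt N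
    · rw [if_pos hcond]
      have hmnn : (0:ℝ) ≤ (m:ℝ)/2 := by positivity
      have hNgt : σ^2 * ((m:ℝ)/2) < N := by
        have h0 : 0 ≤ σ * Real.sqrt ((m : ℝ) / 2) := by positivity
        have := mul_self_lt_mul_self h0 hcond
        rw [Real.mul_self_sqrt hNnn] at this
        nlinarith [Real.sq_sqrt hmnn, Real.sqrt_nonneg ((m:ℝ)/2)]
      rw [hrho2 x, ← hN]
      have he : Real.exp (-c2 * N) = Real.exp (-c1 * N) * Real.exp (-c1 * N) := by
        rw [← Real.exp_add]; congr 1; rw [hc1, hc2]; ring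
      rw [he]
      have hle : Real.exp (-c1 * N) ≤ Real.exp (-Real.pi * m / 2) := by
        apply Real.exp_le_exp.2
        rw [hc1]
        have hσ2 : (0:ℝ) < σ^2 := by positivity
        rw [show -(Real.pi / σ ^ 2) * N = -(Real.pi * N / σ^2) by ring,
          show -Real.pi * (m:ℝ) / 2 = -(Real.pi * m / 2) by ring, neg_le_neg_iff,
          le_div_iff₀ hσ2]
        nlinarith [hNgt, hπpos]
      have hpos : 0 < Real.exp (-c1 * N) := Real.exp_pos _
      nlinarith [hle, hpos, Real.exp_pos (-Real.pi * (m:ℝ) / 2)]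
    · rw [if_neg hcond]
      positivity
  -- A upper bound
  have hAub : A ≤ (102/100) * σ := by
    have := aux_theta_upper (q := q) hc1pos
    have hsq : Real.sqrt (Real.pi / c1) = σ := by
      rw [hc1]
      rw [show Real.pi / (Real.pi / σ^2) = σ^2 by field_simp]
      exact Real.sqrt_sq hσpos.le
    rw [hsq] at this
    rw [hA]
    linarith
  -- B lower bound
  set n : ℕ := ⌊σ/4⌋₊ with hn
  have hnle : (n:ℝ) ≤ σ/4 := Nat.floor_le (by positivity)
  have hnge : σ/4 < (n:ℝ) + 1 := Nat.lt_floor_add_one _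
  have h2nq : 2*n < q := by
    have h4 : ((2*n:ℕ):ℝ) < (q:ℝ) := by push_cast; nlinarith
    exact Nat.cast_lt.mp h4
  have hBlb : (49/100) * σ * Real.exp (-(Real.pi/8)) ≤ B := by
    have h := aux_theta_lower (q := q) hc2pos.le n h2nq
    have hexple : Real.exp (-(Real.pi/8)) ≤ Real.exp (-c2 * (n:ℝ)^2) := by
      apply Real.exp_le_exp.2
      rw [hc2]
      have : 2*Real.pi/σ^2 * (n:ℝ)^2 ≤ Real.pi/8 := by
        rw [div_mul_eq_mul_div, div_le_div_iff₀ (by positivity) (by norm_num)]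
        have hn2 : (n:ℝ)^2 ≤ (σ/4)^2 := by
          apply pow_le_pow_left₀ (Nat.cast_nonneg n) hnle
        nlinarith [hn2, hπpos]
      linarith
    have hcount : (49/100) * σ ≤ 2*(n:ℝ)+1 := by nlinarith
    calc (49/100) * σ * Real.exp (-(Real.pi/8))
        ≤ (2*(n:ℝ)+1) * Real.exp (-c2 * (n:ℝ)^2) := by
          apply mul_le_mul hcount hexple (Real.exp_pos _).le (by positivity)
      _ ≤ B := h
  -- key constant inequality
  have hkey : Real.exp (-(Real.pi/2)) * A ≤ (9/10) * B := by
    have hexp : (1 + 3*Real.pi/16)^2 ≤ Real.exp (3*Real.pi/8) := by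
      rw [show (3*Real.pi/8) = 3*Real.pi/16 + 3*Real.pi/16 by ring, Real.exp_add, sq]
      have h1' : 1 + 3*Real.pi/16 ≤ Real.exp (3*Real.pi/16) := by linarith [Real.add_one_le_exp (3*Real.pi/16)]
      nlinarith [h1', Real.exp_pos (3*Real.pi/16)]
    have hA0 : 0 ≤ A := Finset.sum_nonneg fun v _ => (Real.exp_pos _).le
    have e1 : Real.exp (-(Real.pi/2)) = Real.exp (-(Real.pi/8)) * (Real.exp (3*Real.pi/8))⁻¹ := by
      rw [← Real.exp_neg, ← Real.exp_add]; ring_nf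
    have hexpval : (625/256 : ℝ) ≤ Real.exp (3*Real.pi/8) := by nlinarith [hexp, hπ]
    calc Real.exp (-(Real.pi/2)) * A ≤ Real.exp (-(Real.pi/2)) * ((102/100)*σ) := by
          apply mul_le_mul_of_nonneg_left hAub (Real.exp_pos _).le
      _ ≤ (9/10) * ((49/100) * σ * Real.exp (-(Real.pi/8))) := by
          rw [e1]
          rw [show Real.exp (-(Real.pi/8)) * (Real.exp (3*Real.pi/8))⁻¹ * (102 / 100 * σ)
            = (Real.exp (-(Real.pi/8)) * σ) * ((102/100) * (Real.exp (3*Real.pi/8))⁻¹) by ring,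
            show (9:ℝ)/10 * (49 / 100 * σ * Real.exp (-(Real.pi/8)))
            = (Real.exp (-(Real.pi/8)) * σ) * (441/1000) by ring]
          apply mul_le_mul_of_nonneg_left _ (by positivity)
          have hinv : (Real.exp (3*Real.pi/8))⁻¹ ≤ 256/625 := by
            have := inv_anti₀ (by norm_num : (0:ℝ) < 625/256) hexpval
            norm_num at this ⊢
            linarith
          nlinarith [hinv, Real.exp_pos (3*Real.pi/8)]
      _ ≤ (9/10) * B := by nlinarith [hBlb]
  -- conclude
  have hexpm : Real.exp (-Real.pi * m / 2) = (Real.exp (-(Real.pi/2)))^m := by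
    rw [← Real.exp_nat_mul]; congr 1; ring
  have hB0 : 0 ≤ B := Finset.sum_nonneg fun v _ => (Real.exp_pos _).le
  have hA0 : 0 ≤ A := Finset.sum_nonneg fun v _ => (Real.exp_pos _).le
  calc (∑ x : Fin m → ZMod q,
        if σ * Real.sqrt ((m : ℝ) / 2) < Real.sqrt (∑ i, (zrep x i) ^ 2)
        then rho σ (zrep x) ^ 2 else 0)
      ≤ Real.exp (-Real.pi * m / 2) * A ^ m := hnum
    _ = (Real.exp (-(Real.pi/2)) * A) ^ m := by rw [hexpm, mul_pow]
    _ ≤ ((9/10) * B) ^ m := by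
        apply pow_le_pow_left₀ (by positivity) hkey
    _ = (9/10:ℝ)^m * B^m := mul_pow _ _ _
    _ = (9/10:ℝ)^m * ∑ x : Fin m → ZMod q, rho σ (zrep x) ^ 2 := by rw [hden]

set_option maxHeartbeats 1000000 in
/-- for every `c > 0` there is `M` such that for all `m ≥ M`, `q ≥ 2` and
`σ ∈ (√(2m), q/√(2m))`:
`(Σ_{x ∈ ℤ_q^m, ‖x‖ > σ√(m/2)} ρ_σ(x)²) / (Σ_{x ∈ ℤ_q^m} ρ_σ(x)²) ≤ m^(-c)`, and
consequently the normalized Gaussian state `ψ = Σ_x ρ_σ(x)|x⟩/‖·‖₂` is within trace distance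
`m^(-c/2)` (hence negligible in `m`) of its normalized truncation to
`{x ∈ ℤ_q^m : ‖x‖ ≤ σ√(m/2)}`. -/
theorem stmt_9 :
    ∀ c : ℝ, 0 < c → ∃ M : ℕ, ∀ m : ℕ, M ≤ m →
      ∀ (q : ℕ) [NeZero q], 2 ≤ q →
      ∀ σ : ℝ, Real.sqrt (2 * m) < σ → σ < q / Real.sqrt (2 * m) →
      ((∑ x : Fin m → ZMod q,
          if σ * Real.sqrt ((m : ℝ) / 2) < Real.sqrt (∑ i, (zrep x i) ^ 2)
          then rho σ (zrep x) ^ 2 else 0) /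
        (∑ x : Fin m → ZMod q, rho σ (zrep x) ^ 2) ≤ (m : ℝ) ^ (-c))
      ∧ Real.sqrt (1 -
          ((∑ x : Fin m → ZMod q, rho σ (zrep x) * psiTrunc σ x) /
            (Real.sqrt (∑ x : Fin m → ZMod q, rho σ (zrep x) ^ 2) *
              Real.sqrt (∑ x : Fin m → ZMod q, psiTrunc σ x ^ 2))) ^ 2)
          ≤ (m : ℝ) ^ (-c / 2) := by
  intro c hc
  set k := ⌈c⌉₊ with hk
  have hten : Filter.Tendsto (fun m : ℕ => (m:ℝ)^k * (9/10:ℝ)^m) Filter.atTop (nhds 0) :=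
    tendsto_pow_const_mul_const_pow_of_lt_one k (by norm_num) (by norm_num)
  have hev : ∀ᶠ m : ℕ in Filter.atTop, (m:ℝ)^k * (9/10:ℝ)^m ≤ 1 :=
    hten.eventually (eventually_le_nhds (by norm_num))
  obtain ⟨M, hM⟩ := Filter.eventually_atTop.mp (hev.and (Filter.eventually_ge_atTop 5000))
  refine ⟨M, ?_⟩
  intro m hm q _ hq σ hσ1 hσ2
  obtain ⟨hbound, hm5000⟩ := hM m hm
  have hmain := aux_ratio (q := q) hm5000 hσ1 hσ2
  have hσpos : 0 < σ := lt_of_le_of_lt (Real.sqrt_nonneg _) hσ1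
  set Num := (∑ x : Fin m → ZMod q,
      if σ * Real.sqrt ((m : ℝ) / 2) < Real.sqrt (∑ i, (zrep x i) ^ 2)
      then rho σ (zrep x) ^ 2 else 0) with hNum
  set S := ∑ x : Fin m → ZMod q, rho σ (zrep x) ^ 2 with hS
  have hSpos : 0 < S := by
    exact Finset.sum_pos (fun x _ => pow_pos (Real.exp_pos _) 2) Finset.univ_nonempty
  have hm1 : (1:ℝ) ≤ (m:ℝ) := by
    have : (5000:ℝ) ≤ (m:ℝ) := by exact_mod_cast hm5000
    linarith
  -- (9/10)^m ≤ m^(-c)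
  have hpow : (9/10:ℝ)^m ≤ (m:ℝ) ^ (-c) := by
    have hmk : (0:ℝ) < (m:ℝ)^k := by positivity
    have h5 : (9/10:ℝ)^m ≤ ((m:ℝ)^k)⁻¹ := by
      rw [← one_div, le_div_iff₀ hmk]
      nlinarith [hbound]
    have h6 : ((m:ℝ)^k)⁻¹ = (m:ℝ) ^ (-(k:ℝ)) := by
      rw [Real.rpow_neg (by positivity), Real.rpow_natCast]
    have h7 : (m:ℝ) ^ (-(k:ℝ)) ≤ (m:ℝ) ^ (-c) := by
      apply Real.rpow_le_rpow_of_exponent_le hm1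
      have := Nat.le_ceil c
      rw [hk]; linarith
    calc (9/10:ℝ)^m ≤ ((m:ℝ)^k)⁻¹ := h5
      _ = (m:ℝ) ^ (-(k:ℝ)) := h6
      _ ≤ (m:ℝ) ^ (-c) := h7
  have hpart1 : Num / S ≤ (m:ℝ) ^ (-c) := by
    calc Num / S ≤ (9/10:ℝ)^m := by
          rw [div_le_iff₀ hSpos]; exact hmain
      _ ≤ (m:ℝ) ^ (-c) := hpow
  refine ⟨hpart1, ?_⟩
  -- part 2
  set Ss := ∑ x : Fin m → ZMod q, psiTrunc σ x ^ 2 with hSs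
  have hpsisq : ∀ x : Fin m → ZMod q, psiTrunc σ x ^ 2
      = if Real.sqrt (∑ i, (zrep x i) ^ 2) ≤ σ * Real.sqrt ((m : ℝ) / 2)
        then rho σ (zrep x) ^ 2 else 0 := by
    intro x
    rw [psiTrunc]
    by_cases h : Real.sqrt (∑ i, (zrep x i) ^ 2) ≤ σ * Real.sqrt ((m : ℝ) / 2)
    · rw [if_pos h, if_pos h]
    · rw [if_neg h, if_neg h]; norm_num
  have hinner : ∑ x : Fin m → ZMod q, rho σ (zrep x) * psiTrunc σ x = Ss := by
    rw [hSs]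
    apply Finset.sum_congr rfl
    intro x _
    rw [hpsisq x, psiTrunc]
    by_cases h : Real.sqrt (∑ i, (zrep x i) ^ 2) ≤ σ * Real.sqrt ((m : ℝ) / 2)
    · rw [if_pos h, if_pos h, sq]
    · rw [if_neg h, if_neg h, mul_zero]
  have hsplit : S = Ss + Num := by
    rw [hS, hSs, hNum, ← Finset.sum_add_distrib]
    apply Finset.sum_congr rfl
    intro x _
    rw [hpsisq x]
    by_cases h : Real.sqrt (∑ i, (zrep x i) ^ 2) ≤ σ * Real.sqrt ((m : ℝ) / 2)
    · rw [if_pos h, if_neg (not_lt.mpr h), add_zero]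
    · rw [if_neg h, if_pos (lt_of_not_ge h), zero_add]
  have hSspos : 0 < Ss := by
    rw [hSs]
    apply Finset.sum_pos' (fun x _ => by positivity)
    refine ⟨(fun _ => 0 : Fin m → ZMod q), Finset.mem_univ _, ?_⟩
    rw [hpsisq]
    have hz : ∀ i : Fin m, zrep (q := q) (m := m) (fun _ => (0 : ZMod q)) i = 0 := by
      intro i; simp [zrep]
    have : (∑ i : Fin m, (zrep (q := q) (m := m) (fun _ => (0 : ZMod q)) i) ^ 2) = 0 := by
      apply Finset.sum_eq_zero; intro i _; rw [hz i]; ring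
    rw [this, Real.sqrt_zero, if_pos (by positivity)]
    exact pow_pos (Real.exp_pos _) 2
  have hSsnn : 0 ≤ Ss := hSspos.le
  have hSne : S ≠ 0 := ne_of_gt hSpos
  rw [hinner]
  have hq2 : (Ss / (Real.sqrt S * Real.sqrt Ss))^2 = Ss / S := by
    rw [div_pow, mul_pow, Real.sq_sqrt hSpos.le, Real.sq_sqrt hSsnn, sq,
      mul_comm S Ss, mul_div_mul_left _ _ (ne_of_gt hSspos)]
  have hq3 : 1 - (Ss / (Real.sqrt S * Real.sqrt Ss))^2 = Num / S := by
    rw [hq2]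
    field_simp
    linarith [hsplit]
  rw [hq3]
  have h8 : Real.sqrt (Num / S) ≤ Real.sqrt ((m:ℝ) ^ (-c)) := Real.sqrt_le_sqrt hpart1
  have h9 : Real.sqrt ((m:ℝ) ^ (-c)) = (m:ℝ) ^ (-c / 2) := by
    rw [Real.sqrt_eq_rpow, ← Real.rpow_mul (Nat.cast_nonneg m)]
    congr 1
    ring
  linarith [h8, h9.symm ▸ h8]
end

section
/- Let q ≥ 2, N, n, m, w ∈ ℕ, and let there be given integer matrices A_i ∈ ℤ^(w×m) for i ∈ {0, 1, …, N}, D_{i,b} ∈ ℤ^(m×m) and G_{i,b} ∈ ℤ^(w×w) and E_{i,b} ∈ ℤ^(w×m) for i ∈ {1, …, N} and b ∈ {0,1}, together with bounds d, g, e ≥ 0 such that for all i, b: every entry of D_{i,b} has absolute value at most d, every entry of G_{i,b} has absolute value at most g, every entry of E_{i,b} has absolute value at most e, and A_{i−1}·D_{i,b} ≡ G_{i,b}·A_i + E_{i,b} (mod q). Then for every x ∈ {0,1}^N there exists an integer matrix E_x ∈ ℤ^(w×m) with every entry of absolute value at most N·e·(max(m·d, w·g))^(N−1) such that A_0·D_x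 ≡ G_x·A_N + E_x (mod q), where D_x = D_{1,x₁}·⋯·D_{N,x_N} and G_x = G_{1,x₁}·⋯·G_{N,x_N} are the ordered subset products. -/
private lemma stmt12_mul_bound {k n l : ℕ} (X : Matrix (Fin k) (Fin n) ℤ)
    (Y : Matrix (Fin n) (Fin l) ℤ) (bx by' : ℝ) (hbx : 0 ≤ bx)
    (hx : ∀ a c, (|X a c| : ℝ) ≤ bx) (hy : ∀ a c, (|Y a c| : ℝ) ≤ by')
    (a : Fin k) (c : Fin l) : (|(X * Y) a c| : ℝ) ≤ n * bx * by' := by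
  have h0 : (|(X * Y) a c| : ℝ) = |∑ j, (X a j : ℝ) * (Y j c : ℝ)| := by
    push_cast [Matrix.mul_apply]; ring_nf
  rw [h0]
  refine (Finset.abs_sum_le_sum_abs _ _).trans ?_
  have h1 : ∀ j ∈ Finset.univ, |(X a j : ℝ) * (Y j c : ℝ)| ≤ bx * by' := by
    intro j _
    rw [abs_mul]
    exact mul_le_mul (hx a j) (hy j c) (abs_nonneg _) hbx
  refine (Finset.sum_le_sum h1).trans ?_
  simp [Finset.sum_const, Finset.card_univ, mul_assoc]

private lemma stmt12_prod_bound {w : ℕ} (g : ℝ) (hg : 0 ≤ g) :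
    ∀ (L : List (Matrix (Fin w) (Fin w) ℤ)), L ≠ [] →
      (∀ M ∈ L, ∀ a c, (|M a c| : ℝ) ≤ g) →
      ∀ a c, (|L.prod a c| : ℝ) ≤ g * ((w : ℝ) * g) ^ (L.length - 1) := by
  intro L
  induction L with
  | nil => intro h; exact absurd rfl h
  | cons M t ih =>
    intro _ hmem a c
    rcases eq_or_ne t [] with rfl | ht
    · simpa using hmem M (by simp) a c
    · rw [List.prod_cons]
      obtain ⟨k, hk⟩ : ∃ k, t.length = k + 1 :=
        ⟨t.length - 1, (Nat.succ_pred_eq_of_pos (List.length_pos_iff.mpr ht)).symm⟩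
      have hprod : ∀ a c, (|t.prod a c| : ℝ) ≤ g * ((w : ℝ) * g) ^ k := by
        intro a c
        have := ih ht (fun M hM => hmem M (List.mem_cons_of_mem _ hM)) a c
        rwa [hk, Nat.add_sub_cancel] at this
      have hb := stmt12_mul_bound M t.prod g (g * ((w : ℝ) * g) ^ k) hg
        (fun a c => hmem M (by simp) a c) hprod a c
      calc (|(M * t.prod) a c| : ℝ) ≤ (w : ℝ) * g * (g * ((w : ℝ) * g) ^ k) := hb
        _ = g * ((w : ℝ) * g) ^ (k + 1) := by ring
        _ = g * ((w : ℝ) * g) ^ ((M :: t).length - 1) := by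
            simp [hk]

private lemma stmt12_aux (q m w : ℕ) (d g e : ℝ) (hd : 0 ≤ d) (hg : 0 ≤ g)
    (he : 0 ≤ e) :
    ∀ (N : ℕ) (A : Fin (N + 1) → Matrix (Fin w) (Fin m) ℤ)
      (D : Fin N → Matrix (Fin m) (Fin m) ℤ)
      (G : Fin N → Matrix (Fin w) (Fin w) ℤ)
      (E : Fin N → Matrix (Fin w) (Fin m) ℤ),
      (∀ i a c, (|D i a c| : ℝ) ≤ d) →
      (∀ i a c, (|G i a c| : ℝ) ≤ g) →
      (∀ i a c, (|E i a c| : ℝ) ≤ e) →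
      (∀ i, (A i.castSucc * D i).map (Int.castRingHom (ZMod q))
          = (G i * A i.succ + E i).map (Int.castRingHom (ZMod q))) →
      ∃ Ex : Matrix (Fin w) (Fin m) ℤ,
        (∀ a c, (|Ex a c| : ℝ) ≤
            N * e * (max ((m : ℝ) * d) ((w : ℝ) * g)) ^ (N - 1)) ∧
        (A 0 * (List.ofFn D).prod).map (Int.castRingHom (ZMod q))
          = ((List.ofFn G).prod * A (Fin.last N) + Ex).map
              (Int.castRingHom (ZMod q)) := by
  intro N
  induction N with
  | zero =>
    intro A D G E _ _ _ _
    refine ⟨0, by simp, ?_⟩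
    simp [List.ofFn_zero, Fin.last]
  | succ N ih =>
    intro A D G E hD hG hE hcong
    set f := Int.castRingHom (ZMod q) with hf
    have mapmul : ∀ {α β γ : ℕ} (X : Matrix (Fin α) (Fin β) ℤ)
        (Y : Matrix (Fin β) (Fin γ) ℤ),
        (X * Y).map f = X.map f * Y.map f := fun X Y => Matrix.map_mul
    have mapadd : ∀ {α β : ℕ} (X Y : Matrix (Fin α) (Fin β) ℤ),
        (X + Y).map f = X.map f + Y.map f :=
      fun X Y => Matrix.map_add _ (map_add f) X Y
    obtain ⟨Ex', hEx'b, hEx'c⟩ := ih (fun i => A i.castSucc)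
      (fun i => D i.castSucc) (fun i => G i.castSucc) (fun i => E i.castSucc)
      (fun i a c => hD _ a c) (fun i a c => hG _ a c) (fun i a c => hE _ a c)
      (fun i => by
        have := hcong i.castSucc
        rwa [Fin.succ_castSucc] at this)
    set M : ℝ := max ((m : ℝ) * d) ((w : ℝ) * g) with hM
    have hmdM : (m : ℝ) * d ≤ M := le_max_left _ _
    have hwgM : (w : ℝ) * g ≤ M := le_max_right _ _
    have hM0 : 0 ≤ M := le_trans (by positivity) hmdM
    set P : Matrix (Fin w) (Fin w) ℤ :=
      (List.ofFn fun i : Fin N => G i.castSucc).prod with hP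
    refine ⟨P * E (Fin.last N) + Ex' * D (Fin.last N), ?_, ?_⟩
    · -- bound
      intro a c
      have habs : (|(P * E (Fin.last N) + Ex' * D (Fin.last N)) a c| : ℝ) ≤
          (|(P * E (Fin.last N)) a c| : ℝ) + (|(Ex' * D (Fin.last N)) a c| : ℝ) := by
        rw [Matrix.add_apply]; push_cast; exact abs_add_le _ _
      refine habs.trans ?_
      obtain (rfl | ⟨k, rfl⟩) : N = 0 ∨ ∃ k, N = k + 1 := by
        rcases N with _ | k
        exacts [Or.inl rfl, Or.inr ⟨k, rfl⟩]
      · -- N = 0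
        have hEx0 : ∀ a c, Ex' a c = 0 := by
          intro a c
          have h1 := hEx'b a c
          simpa using h1
        have hEx0' : Ex' = 0 := by ext a c; exact hEx0 a c
        have hP1 : P = 1 := by simp [hP]
        rw [hEx0', hP1]
        simp only [Matrix.one_mul, Matrix.zero_mul, Matrix.zero_apply]
        simpa using hE (Fin.last 0) a c
      · -- N = k + 1
        have hPb : ∀ a c, (|P a c| : ℝ) ≤ g * ((w : ℝ) * g) ^ k := by
          intro a c
          have hne : (List.ofFn fun i : Fin (k + 1) => G i.castSucc) ≠ [] := by
            simp [← List.length_pos_iff]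
          have hmem : ∀ X ∈ (List.ofFn fun i : Fin (k + 1) => G i.castSucc),
              ∀ a c, (|X a c| : ℝ) ≤ g := by
            intro X hX a c
            rw [List.mem_ofFn] at hX
            obtain ⟨i, rfl⟩ := hX
            exact hG _ a c
          have := stmt12_prod_bound g hg _ hne hmem a c
          simpa only [List.length_ofFn, Nat.add_sub_cancel] using this
        have hT1 : (|(P * E (Fin.last (k + 1))) a c| : ℝ) ≤ e * M ^ (k + 1) := by
          have hb := stmt12_mul_bound P (E (Fin.last (k + 1)))
            (g * ((w : ℝ) * g) ^ k) e (by positivity) hPb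
            (fun a c => hE _ a c) a c
          refine hb.trans ?_
          have h1 : (w : ℝ) * (g * ((w : ℝ) * g) ^ k) * e
              = e * ((w : ℝ) * g) ^ (k + 1) := by ring
          rw [h1]
          have := pow_le_pow_left₀ (by positivity) hwgM (k + 1)
          nlinarith [pow_nonneg (show (0:ℝ) ≤ (w : ℝ) * g by positivity) (k+1)]
        have hT2 : (|(Ex' * D (Fin.last (k + 1))) a c| : ℝ) ≤
            (k + 1 : ℝ) * e * M ^ (k + 1) := by
          have hEx'b' : ∀ a c, (|Ex' a c| : ℝ) ≤ (k + 1 : ℝ) * e * M ^ k := by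
            intro a c
            have := hEx'b a c
            simpa using this
          have hb := stmt12_mul_bound Ex' (D (Fin.last (k + 1)))
            ((k + 1 : ℝ) * e * M ^ k) d (by positivity) hEx'b'
            (fun a c => hD _ a c) a c
          refine hb.trans ?_
          have h1 : (m : ℝ) * ((k + 1 : ℝ) * e * M ^ k) * d
              = (k + 1 : ℝ) * e * (M ^ k * ((m : ℝ) * d)) := by ring
          have h2 : M ^ k * ((m : ℝ) * d) ≤ M ^ k * M :=
            mul_le_mul_of_nonneg_left hmdM (pow_nonneg hM0 k)
          have h3 : M ^ k * M = M ^ (k + 1) := (pow_succ M k).symm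
          rw [h1, ← h3]
          exact mul_le_mul_of_nonneg_left h2 (by positivity)
        have htot : (|(P * E (Fin.last (k+1))) a c| : ℝ)
            + (|(Ex' * D (Fin.last (k+1))) a c| : ℝ)
            ≤ e * M ^ (k + 1) + (k + 1 : ℝ) * e * M ^ (k + 1) :=
          add_le_add hT1 hT2
        refine htot.trans ?_
        have : ((k + 1 + 1 : ℕ) : ℝ) = (k : ℝ) + 2 := by push_cast; ring
        rw [this]
        have : (k + 1 + 1 - 1 : ℕ) = k + 1 := rfl
        rw [this]
        nlinarith [pow_nonneg hM0 (k + 1), mul_nonneg he (pow_nonneg hM0 (k+1))]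
    · -- congruence
      rw [List.ofFn_succ' D, List.ofFn_succ' G, List.prod_concat, List.prod_concat]
      have hEx'c' : (A 0).map f * (List.ofFn fun i : Fin N => D i.castSucc).prod.map f
          = P.map f * (A (Fin.last N).castSucc).map f + Ex'.map f := by
        have h := hEx'c
        rw [mapmul, mapadd, mapmul] at h
        simpa [Fin.castSucc_zero] using h
      have hlast : (A (Fin.last N).castSucc).map f * (D (Fin.last N)).map f
          = (G (Fin.last N)).map f * (A (Fin.last (N + 1))).map f
            + (E (Fin.last N)).map f := by
        have h := hcong (Fin.last N)
        rw [Fin.succ_last] at h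
        rw [mapmul, mapadd, mapmul] at h
        exact h
      rw [mapmul, mapmul, mapadd, mapmul, mapadd, mapmul, mapmul, mapmul]
      rw [← Matrix.mul_assoc, hEx'c', Matrix.add_mul, Matrix.mul_assoc, hlast,
        Matrix.mul_add, ← Matrix.mul_assoc, add_assoc, ← hP]

/-- GGH15 error accumulation: given integer matrices
`A_i ∈ ℤ^(w×m)` (`i = 0,…,N`), `D_{i,b} ∈ ℤ^(m×m)`, `G_{i,b} ∈ ℤ^(w×w)`,
`E_{i,b} ∈ ℤ^(w×m)` with entrywise bounds `d, g, e ≥ 0` and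
`A_{i-1}·D_{i,b} ≡ G_{i,b}·A_i + E_{i,b} (mod q)`, for every `x ∈ {0,1}^N` there is
`E_x ∈ ℤ^(w×m)` with entries bounded by `N·e·(max(m·d, w·g))^(N-1)` such that
`A_0·D_x ≡ G_x·A_N + E_x (mod q)`, where `D_x`, `G_x` are ordered subset products. -/
theorem stmt_12 (q : ℕ) (hq : 2 ≤ q) (N n m w : ℕ)
    (A : Fin (N + 1) → Matrix (Fin w) (Fin m) ℤ)
    (D : Fin N → Bool → Matrix (Fin m) (Fin m) ℤ)
    (G : Fin N → Bool → Matrix (Fin w) (Fin w) ℤ)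
    (E : Fin N → Bool → Matrix (Fin w) (Fin m) ℤ)
    (d g e : ℝ) (hd : 0 ≤ d) (hg : 0 ≤ g) (he : 0 ≤ e)
    (hD : ∀ i b a c, (|D i b a c| : ℝ) ≤ d)
    (hG : ∀ i b a c, (|G i b a c| : ℝ) ≤ g)
    (hE : ∀ i b a c, (|E i b a c| : ℝ) ≤ e)
    (hcong : ∀ (i : Fin N) (b : Bool) (a : Fin w) (c : Fin m),
      (A i.castSucc * D i b) a c ≡ (G i b * A i.succ + E i b) a c [ZMOD (q : ℤ)]) :
    ∀ x : Fin N → Bool,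
      ∃ Ex : Matrix (Fin w) (Fin m) ℤ,
        (∀ a c, (|Ex a c| : ℝ) ≤
          N * e * (max ((m : ℝ) * d) ((w : ℝ) * g)) ^ (N - 1)) ∧
        ∀ a c,
          (A 0 * (List.ofFn fun i => D i (x i)).prod) a c ≡
            ((List.ofFn fun i => G i (x i)).prod * A (Fin.last N) + Ex) a c
            [ZMOD (q : ℤ)] := by
  intro x
  have hmap : ∀ i : Fin N,
      (A i.castSucc * D i (x i)).map (Int.castRingHom (ZMod q))
        = (G i (x i) * A i.succ + E i (x i)).map (Int.castRingHom (ZMod q)) := by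
    intro i
    ext a c
    simp only [Matrix.map_apply]
    exact (ZMod.intCast_eq_intCast_iff _ _ _).mpr (hcong i (x i) a c)
  obtain ⟨Ex, hb, hc⟩ := stmt12_aux q m w d g e hd hg he N A
    (fun i => D i (x i)) (fun i => G i (x i)) (fun i => E i (x i))
    (fun i a c => hD i (x i) a c) (fun i a c => hG i (x i) a c)
    (fun i a c => hE i (x i) a c) hmap
  refine ⟨Ex, hb, fun a c => ?_⟩
  have := congrFun (congrFun hc a) c
  simp only [Matrix.map_apply] at this
  exact (ZMod.intCast_eq_intCast_iff _ _ _).mp this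
end
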